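/- arXiv:1902.07187 — 6 statements merged into one kernel-verified Lean document; each statement's English description precedes it below -/
import Mathlib

section
/- If λ_n > 0 for every user n ∈ {1,…,N}, then the spectral radius of the propagation matrix satisfies ρ(A) < 1. -/
open Matrix Finset Filter

/-- Spectral radius of a real square matrix: the maximum of `|z|` over the
complex eigenvalues `z` (roots of the characteristic polynomial over `ℂ`). -/
noncomputable def specRad (N : ℕ) (T : Matrix (Fin N) (Fin N) ℝ) : ℝ :=
  sSup {r : ℝ | ∃ z : ℂ, ((T.map Complex.ofReal).charpoly).IsRoot z ∧ r = ‖z‖}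

/-- The propagation matrix `A`. -/
noncomputable def propA (N : ℕ) (L : Fin N → Finset (Fin N)) (lam mu : Fin N → ℝ) :
    Matrix (Fin N) (Fin N) ℝ :=
  Matrix.of fun j k => if k ∈ L j then mu k / (∑ l ∈ L j, (lam l + mu l)) else 0

/-- The vector `b_i`. -/
noncomputable def bvec (N : ℕ) (L : Fin N → Finset (Fin N)) (lam mu : Fin N → ℝ)
    (i : Fin N) : Fin N → ℝ :=
  fun j => if i ∈ L j then lam i / (∑ l ∈ L j, (lam l + mu l)) else 0

/-- The diagonal matrix `C`. -/
noncomputable def Cmat (N : ℕ) (lam mu : Fin N → ℝ) : Matrix (Fin N) (Fin N) ℝ :=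
  Matrix.diagonal fun j => mu j / (lam j + mu j)

/-- The vector `d_i`. -/
noncomputable def dvec (N : ℕ) (lam mu : Fin N → ℝ) (i : Fin N) : Fin N → ℝ :=
  fun j => if j = i then lam i / (lam i + mu i) else 0

/-- Every root of the complexified characteristic polynomial is bounded in absolute
value by any bound `c` on the absolute row sums. -/
lemma root_abs_le_rowsum {N : ℕ} (M : Matrix (Fin N) (Fin N) ℝ) (c : ℝ)
    (hc : ∀ j, ∑ k, |M j k| ≤ c) {z : ℂ}
    (hz : ((M.map Complex.ofReal).charpoly).IsRoot z) : ‖z‖ ≤ c := by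
  set B := M.map Complex.ofReal with hB
  have hdet : (Matrix.scalar (Fin N) z - B).det = 0 := by
    have h := hz
    rw [Polynomial.IsRoot, Matrix.charpoly, eval_det, matPolyEquiv_charmatrix] at h
    simpa using h
  obtain ⟨v, hv0, hmv⟩ := (Matrix.exists_mulVec_eq_zero_iff).2 hdet
  have heig : ∀ j, z * v j = ∑ k, B j k * v k := by
    intro j
    have h := congrFun hmv j
    simp only [Matrix.sub_mulVec, Matrix.scalar_apply, Pi.sub_apply, Pi.zero_apply,
      sub_eq_zero] at h
    have h1 : (Matrix.diagonal fun _ : Fin N => z).mulVec v j = z * v j := by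
      simp [Matrix.mulVec_diagonal]
    rw [h1] at h
    rw [h]
    rfl
  obtain ⟨k0, hk0⟩ := Function.ne_iff.mp hv0
  obtain ⟨j, -, hj⟩ := Finset.exists_max_image Finset.univ (fun k => ‖v k‖)
    ⟨k0, Finset.mem_univ _⟩
  have hvj : 0 < ‖v j‖ := by
    have hk' : 0 < ‖v k0‖ := by simpa [norm_pos_iff] using hk0
    exact lt_of_lt_of_le hk' (hj k0 (Finset.mem_univ k0))
  have key : ‖z‖ * ‖v j‖ ≤ c * ‖v j‖ := by
    calc ‖z‖ * ‖v j‖ = ‖z * v j‖ := (norm_mul _ _).symm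
      _ = ‖∑ k, B j k * v k‖ := by rw [heig j]
      _ ≤ ∑ k, ‖B j k * v k‖ := norm_sum_le _ _
      _ ≤ ∑ k, |M j k| * ‖v j‖ := by
          apply Finset.sum_le_sum
          intro k _
          rw [norm_mul]
          have : ‖B j k‖ = |M j k| := by
            simp [hB, Matrix.map_apply, Complex.norm_real]
          rw [this]
          exact mul_le_mul_of_nonneg_left (hj k (Finset.mem_univ k)) (abs_nonneg _)
      _ = (∑ k, |M j k|) * ‖v j‖ := by rw [Finset.sum_mul]
      _ ≤ c * ‖v j‖ := mul_le_mul_of_nonneg_right (hc j) (norm_nonneg _)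
  exact le_of_mul_le_mul_right key hvj

/-- if `λ_n > 0` for every user `n`, then `ρ(A) < 1`. -/
theorem stmt2 (N : ℕ) (hN : 1 ≤ N) (L : Fin N → Finset (Fin N))
    (hL : ∀ j, (L j).Nonempty) (lam mu : Fin N → ℝ)
    (hlam : ∀ n, 0 < lam n) (hmu : ∀ n, 0 ≤ mu n)
    (hpos : ∀ n, 0 < lam n + mu n) :
    specRad N (propA N L lam mu) < 1 := by
  set A : Matrix (Fin N) (Fin N) ℝ := propA N L lam mu with hA
  have hS : ∀ j, 0 < ∑ l ∈ L j, (lam l + mu l) := fun j =>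
    Finset.sum_pos (fun l _ => hpos l) (hL j)
  have hrow : ∀ j, ∑ k, |A j k| < 1 := by
    intro j
    have hnn : ∀ k, 0 ≤ A j k := by
      intro k
      simp only [hA, propA, Matrix.of_apply]
      split
      · exact div_nonneg (hmu k) (hS j).le
      · exact le_rfl
    have h1 : ∑ k, |A j k| = ∑ k, A j k :=
      Finset.sum_congr rfl fun k _ => abs_of_nonneg (hnn k)
    have h2 : ∑ k, A j k = (∑ k ∈ L j, mu k) / (∑ l ∈ L j, (lam l + mu l)) := by
      simp only [hA, propA, Matrix.of_apply]
      rw [Finset.sum_ite_mem, Finset.univ_inter, Finset.sum_div]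
    rw [h1, h2, div_lt_one (hS j)]
    exact Finset.sum_lt_sum_of_nonempty (hL j) fun l _ => by linarith [hlam l]
  have hne : (Finset.univ : Finset (Fin N)).Nonempty := ⟨⟨0, hN⟩, Finset.mem_univ _⟩
  set c : ℝ := Finset.univ.sup' hne (fun j => ∑ k, |A j k|) with hcdef
  have hc : ∀ j, ∑ k, |A j k| ≤ c := fun j =>
    Finset.le_sup' (fun j => ∑ k, |A j k|) (Finset.mem_univ j)
  have hc1 : c < 1 := (Finset.sup'_lt_iff hne).2 fun j _ => hrow j
  have hc0 : 0 ≤ c := le_trans (Finset.sum_nonneg fun k _ => abs_nonneg _) (hc ⟨0, hN⟩)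
  have hsup : specRad N A ≤ c := by
    apply Real.sSup_le
    · rintro r ⟨z, hz, rfl⟩
      exact root_abs_le_rowsum A c hc hz
    · exact hc0
  exact lt_of_le_of_lt hsup hc1
end

section
/- Suppose that for every user j there exists a leader k ∈ L(j) with μ_k > 0, and that for every directed cycle in the Leader-graph (i.e., every finite sequence of users n_1, n_2, …, n_γ, n_{γ+1} = n_1 with γ ≥ 1 and n_t ∈ L(n_{t+1}) for each t) at least one participating user n_t has a leader k ∈ L(n_t) with λ_k > 0. Then the spectral radius of the propagation matrix satisfies ρ(A) < 1. -/
open Matrix Finset Filter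

lemma det_of_isRoot_charpoly (N : ℕ) (B : Matrix (Fin N) (Fin N) ℂ) (z : ℂ)
    (h : B.charpoly.IsRoot z) :
    (z • (1 : Matrix (Fin N) (Fin N) ℂ) - B).det = 0 := by
  have key : (charmatrix B).map (Polynomial.evalRingHom z)
      = z • (1 : Matrix (Fin N) (Fin N) ℂ) - B := by
    ext i j
    by_cases hij : i = j <;>
      simp [hij, charmatrix_apply, Matrix.map_apply, Matrix.one_apply, Matrix.diagonal_apply]
  have h2 := (Polynomial.evalRingHom z).map_det (charmatrix B)
  rw [RingHom.mapMatrix_apply, key] at h2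
  rw [Matrix.charpoly, Polynomial.IsRoot] at h
  rw [← h2]; exact h

lemma root_small (N : ℕ) (hN : 1 ≤ N) (L : Fin N → Finset (Fin N))
    (hL : ∀ j, (L j).Nonempty) (lam mu : Fin N → ℝ)
    (hlam : ∀ n, 0 ≤ lam n) (hmu : ∀ n, 0 ≤ mu n)
    (hpos : ∀ n, 0 < lam n + mu n)
    (hmuL : ∀ j, ∃ k ∈ L j, 0 < mu k)
    (hcycle : ∀ (γ : ℕ), 1 ≤ γ → ∀ n : ℕ → Fin N, n γ = n 0 →
      (∀ t < γ, n t ∈ L (n (t + 1))) → ∃ t < γ, ∃ k ∈ L (n t), 0 < lam k)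
    (z : ℂ) (hz : (((propA N L lam mu).map Complex.ofReal).charpoly).IsRoot z) :
    ‖z‖ < 1 := by
  by_contra hz1
  push_neg at hz1
  -- eigenvector
  have hdet := det_of_isRoot_charpoly N _ z hz
  obtain ⟨v, hv0, hv⟩ := (Matrix.exists_mulVec_eq_zero_iff).2 hdet
  have heig : ∀ j, z * v j = ∑ k ∈ L j,
      ((mu k / (∑ l ∈ L j, (lam l + mu l)) : ℝ) : ℂ) * v k := by
    intro j
    have h0 := congrFun hv j
    have h1 : ((z • (1 : Matrix (Fin N) (Fin N) ℂ) - (propA N L lam mu).map Complex.ofReal) *ᵥ v) j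
        = z * v j - (((propA N L lam mu).map Complex.ofReal) *ᵥ v) j := by
      simp [Matrix.sub_mulVec, Matrix.smul_mulVec, Matrix.one_mulVec]
    rw [h1] at h0
    have h2 : (((propA N L lam mu).map Complex.ofReal) *ᵥ v) j
        = ∑ k ∈ L j, ((mu k / (∑ l ∈ L j, (lam l + mu l)) : ℝ) : ℂ) * v k := by
      rw [Matrix.mulVec, dotProduct]
      rw [← Finset.sum_subset (Finset.subset_univ (L j))]
      · refine Finset.sum_congr rfl fun k hk => ?_
        simp [Matrix.map_apply, propA, hk]
      · intro k _ hk
        simp [Matrix.map_apply, propA, hk]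
    rw [h2] at h0
    have h0' : z * v j - ∑ k ∈ L j, ((mu k / (∑ l ∈ L j, (lam l + mu l)) : ℝ) : ℂ) * v k = 0 := by
      simpa using h0
    linear_combination h0'
  -- max modulus
  obtain ⟨j₀, -, hj₀⟩ := Finset.exists_max_image Finset.univ
    (fun j => ‖v j‖) ⟨⟨0, hN⟩, Finset.mem_univ _⟩
  set M : ℝ := ‖v j₀‖ with hM
  have hmax : ∀ j, ‖v j‖ ≤ M := fun j => hj₀ j (Finset.mem_univ j)
  have hMpos : 0 < M := by
    obtain ⟨j, hj⟩ := Function.ne_iff.1 hv0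
    exact lt_of_lt_of_le (by simpa using hj) (hmax j)
  -- key step
  have step : ∀ j, ‖v j‖ = M →
      (∀ k ∈ L j, lam k = 0) ∧ (∀ k ∈ L j, 0 < mu k → ‖v k‖ = M) := by
    intro j hj
    set D : ℝ := ∑ l ∈ L j, (lam l + mu l) with hD
    have hDpos : 0 < D := Finset.sum_pos (fun l _ => hpos l) (hL j)
    have hmusum : ∑ k ∈ L j, mu k ≤ D := by
      rw [hD]
      exact Finset.sum_le_sum fun k _ => by linarith [hlam k]
    have h2 : M ≤ ∑ k ∈ L j, (mu k / D) * ‖v k‖ := by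
      calc M = 1 * M := (one_mul M).symm
        _ ≤ ‖z‖ * M := by
            apply mul_le_mul_of_nonneg_right hz1 hMpos.le
        _ = ‖z * v j‖ := by rw [norm_mul, hj]
        _ = ‖∑ k ∈ L j, ((mu k / D : ℝ) : ℂ) * v k‖ := by rw [heig j]
        _ ≤ ∑ k ∈ L j, ‖((mu k / D : ℝ) : ℂ) * v k‖ :=
            norm_sum_le _ _
        _ = ∑ k ∈ L j, (mu k / D) * ‖v k‖ := by
            refine Finset.sum_congr rfl fun k _ => ?_
            rw [norm_mul, Complex.norm_real, Real.norm_eq_abs,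
              abs_of_nonneg (div_nonneg (hmu k) hDpos.le)]
    have h3 : ∑ k ∈ L j, (mu k / D) * ‖v k‖ ≤ ∑ k ∈ L j, (mu k / D) * M :=
      Finset.sum_le_sum fun k _ => mul_le_mul_of_nonneg_left (hmax k)
        (div_nonneg (hmu k) hDpos.le)
    have h4 : ∑ k ∈ L j, (mu k / D) * M = (∑ k ∈ L j, mu k) / D * M := by
      rw [Finset.sum_div, Finset.sum_mul]
    have h5 : (∑ k ∈ L j, mu k) / D * M ≤ M := by
      have : (∑ k ∈ L j, mu k) / D ≤ 1 := (div_le_one hDpos).2 hmusum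
      nlinarith
    -- all equalities
    have e1 : (∑ k ∈ L j, mu k) / D * M = M := by
      have := h2.trans h3
      rw [h4] at this
      linarith
    have e2 : ∑ k ∈ L j, mu k = D := by
      have h6 : (∑ k ∈ L j, mu k) / D = 1 := by
        have := mul_right_cancel₀ hMpos.ne' (e1.trans (one_mul M).symm)
        exact this
      field_simp at h6
      exact h6
    have hlam0 : ∀ k ∈ L j, lam k = 0 := by
      have hsum : ∑ k ∈ L j, lam k = 0 := by
        have : ∑ k ∈ L j, lam k + ∑ k ∈ L j, mu k = D := by
          rw [hD, ← Finset.sum_add_distrib]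
        linarith
      intro k hk
      exact (Finset.sum_eq_zero_iff_of_nonneg fun l _ => hlam l).1 hsum k hk
    refine ⟨hlam0, ?_⟩
    -- second: each term equality
    have e3 : ∑ k ∈ L j, (mu k / D) * (M - ‖v k‖) = 0 := by
      have expand : ∑ k ∈ L j, (mu k / D) * (M - ‖v k‖)
          = ∑ k ∈ L j, (mu k / D) * M - ∑ k ∈ L j, (mu k / D) * ‖v k‖ := by
        rw [← Finset.sum_sub_distrib]
        exact Finset.sum_congr rfl fun k _ => by ring
      rw [expand, h4, e1]
      have heq : ∑ k ∈ L j, (mu k / D) * ‖v k‖ = M := by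
        have hub : ∑ k ∈ L j, (mu k / D) * ‖v k‖ ≤ M := by
          rw [h4] at h3; linarith
        linarith
      rw [heq]; ring
    intro k hk hmuk
    have := (Finset.sum_eq_zero_iff_of_nonneg fun l hl =>
      mul_nonneg (div_nonneg (hmu l) hDpos.le) (by linarith [hmax l])).1 e3 k hk
    have hne : mu k / D ≠ 0 := by positivity
    have : M - ‖v k‖ = 0 := by
      rcases mul_eq_zero.1 this with h | h
      · exact absurd h hne
      · exact h
    linarith
  -- build sequence
  choose f hf1 hf2 using hmuL
  set m : ℕ → Fin N := fun t => f^[t] j₀ with hm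
  have hmS : ∀ t, ‖v (m t)‖ = M := by
    intro t
    induction t with
    | zero => simp [hm, hM]
    | succ t ih =>
      have h := (step (m t) ih).2 (f (m t)) (hf1 _) (hf2 _)
      have : m (t + 1) = f (m t) := by
        simp [hm, Function.iterate_succ_apply']
      rw [this]; exact h
  -- pigeonhole
  have hninj : ¬ Function.Injective (fun t : Fin (N + 1) => m t) := by
    intro h
    have := Fintype.card_le_of_injective _ h
    simp at this
  rw [Function.not_injective_iff] at hninj
  obtain ⟨a, b, hab, hne⟩ := hninj
  wlog hlt : (a : ℕ) < (b : ℕ) generalizing a b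
  · exact this b a hab.symm (Ne.symm hne)
      (by rcases lt_or_gt_of_ne (fun h => hne (Fin.ext h) : (a:ℕ) ≠ (b:ℕ)) with h | h
          · exact absurd h hlt
          · exact h)
  set γ : ℕ := (b : ℕ) - (a : ℕ) with hγ
  have hγ1 : 1 ≤ γ := by omega
  set n : ℕ → Fin N := fun t => m ((b : ℕ) - t) with hn
  have hcyc0 : n γ = n 0 := by
    simp only [hn, hγ]
    have : (b : ℕ) - ((b : ℕ) - (a : ℕ)) = (a : ℕ) := by omega
    rw [this, Nat.sub_zero]
    exact hab
  have hedge : ∀ t < γ, n t ∈ L (n (t + 1)) := by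
    intro t ht
    have h1 : (b : ℕ) - t = ((b : ℕ) - t - 1) + 1 := by omega
    have h2 : (b : ℕ) - (t + 1) = (b : ℕ) - t - 1 := by omega
    have key : m ((b : ℕ) - t) = f (m ((b : ℕ) - t - 1)) := by
      rw [h1]
      simp only [hm]
      rw [Function.iterate_succ_apply']
      norm_num
    simp only [hn, h2, key]
    exact hf1 _
  obtain ⟨t, ht, k, hk, hlamk⟩ := hcycle γ hγ1 n hcyc0 hedge
  have := (step (n t) (hmS _)).1 k hk
  linarith

/-- if every user has a leader with positive re-post rate, and for
every directed cycle of the Leader-graph at least one participating user has a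
leader with positive self-post rate, then `ρ(A) < 1`. -/
theorem stmt3 (N : ℕ) (hN : 1 ≤ N) (L : Fin N → Finset (Fin N))
    (hL : ∀ j, (L j).Nonempty) (lam mu : Fin N → ℝ)
    (hlam : ∀ n, 0 ≤ lam n) (hmu : ∀ n, 0 ≤ mu n)
    (hpos : ∀ n, 0 < lam n + mu n)
    (hmuL : ∀ j, ∃ k ∈ L j, 0 < mu k)
    (hcycle : ∀ (γ : ℕ), 1 ≤ γ → ∀ n : ℕ → Fin N, n γ = n 0 →
      (∀ t < γ, n t ∈ L (n (t + 1))) → ∃ t < γ, ∃ k ∈ L (n t), 0 < lam k) :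
    specRad N (propA N L lam mu) < 1 := by
  have key := root_small N hN L hL lam mu hlam hmu hpos hmuL hcycle
  set p := (((propA N L lam mu).map Complex.ofReal).charpoly) with hp
  have hpne : p ≠ 0 := (Matrix.charpoly_monic _).ne_zero
  set E := {r : ℝ | ∃ z : ℂ, p.IsRoot z ∧ r = ‖z‖} with hE
  have hfin : E.Finite := by
    have h1 := Polynomial.finite_setOf_isRoot hpne
    have h2 : E = (fun z : ℂ => ‖z‖) '' {z | p.IsRoot z} := by
      ext r
      constructor
      · rintro ⟨z, hz, hr⟩
        exact ⟨z, hz, hr.symm⟩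
      · rintro ⟨z, hz, hr⟩
        exact ⟨z, hz, hr.symm⟩
    rw [h2]
    exact h1.image (fun z : ℂ => ‖z‖)
  have hne : E.Nonempty := by
    have hcard : p.natDegree = N := by
      rw [hp, Matrix.charpoly_natDegree_eq_dim]
      simp
    have hdeg : 0 < p.degree := Polynomial.natDegree_pos_iff_degree_pos.1 (by omega)
    obtain ⟨z, hz⟩ := Complex.exists_root hdeg
    exact ⟨‖z‖, z, hz, rfl⟩
  have hmem : sSup E ∈ E := hne.csSup_mem hfin
  obtain ⟨z, hz, hr⟩ := hmem
  have : specRad N (propA N L lam mu) = sSup E := rfl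
  rw [this, hr]
  exact key z hz
end

section
/- Suppose N ≥ 2, the propagation matrix A is irreducible (i.e., for all indices j, k there exists an integer m ≥ 1 such that the (j,k) entry of A^m is strictly positive), and λ_j > 0 for at least one user j. Then the spectral radius of the propagation matrix satisfies ρ(A) < 1. -/
open Matrix Finset Filter

lemma pow_entry_nonneg' {N : ℕ} (B : Matrix (Fin N) (Fin N) ℝ) (hB : ∀ i j, 0 ≤ B i j) :
    ∀ m i j, 0 ≤ (B ^ m) i j := by
  intro m
  induction m with
  | zero => intro i j; simp [Matrix.one_apply]; split <;> norm_num
  | succ n ih =>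
    intro i j
    rw [pow_succ, Matrix.mul_apply]
    exact Finset.sum_nonneg fun q _ => mul_nonneg (ih i q) (hB q j)

lemma rowsum_mul' {N : ℕ} (B C : Matrix (Fin N) (Fin N) ℝ) (j : Fin N) :
    ∑ k, (B * C) j k = ∑ q, B j q * ∑ k, C q k := by
  simp_rw [Matrix.mul_apply, Finset.mul_sum]
  exact Finset.sum_comm

lemma rowsum_pow_le_one' {N : ℕ} (B : Matrix (Fin N) (Fin N) ℝ) (hB : ∀ i j, 0 ≤ B i j)
    (hrow : ∀ i, ∑ j, B i j ≤ 1) : ∀ m i, ∑ j, (B ^ m) i j ≤ 1 := by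
  intro m
  induction m with
  | zero => intro i; simp [Matrix.one_apply]
  | succ n ih =>
    intro i
    rw [pow_succ, rowsum_mul']
    calc ∑ q, (B ^ n) i q * ∑ k, B q k
        ≤ ∑ q, (B ^ n) i q * 1 :=
          Finset.sum_le_sum fun q _ =>
            mul_le_mul_of_nonneg_left (hrow q) (pow_entry_nonneg' B hB n i q)
      _ = ∑ q, (B ^ n) i q := by simp
      _ ≤ 1 := ih i

lemma exists_col_pos' {N : ℕ} (B : Matrix (Fin N) (Fin N) ℝ) (hB : ∀ i j, 0 ≤ B i j) :
    ∀ m, 1 ≤ m → ∀ i j, 0 < (B ^ m) i j → ∃ q, 0 < B q j := by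
  intro m
  induction m with
  | zero => omega
  | succ n _ =>
    intro _ i j h
    rw [pow_succ, Matrix.mul_apply] at h
    obtain ⟨q, hq⟩ : ∃ q, 0 < (B ^ n) i q * B q j := by
      by_contra hc
      push_neg at hc
      have : ∑ q, (B ^ n) i q * B q j ≤ 0 := Finset.sum_nonpos fun q _ => hc q
      linarith
    refine ⟨q, ?_⟩
    nlinarith [hB q j, pow_entry_nonneg' B hB n i q]

lemma det_smul_one_sub_eq_zero' {n : Type*} [Fintype n] [DecidableEq n] (M : Matrix n n ℂ)
    {z : ℂ} (hz : M.charpoly.IsRoot z) : (z • (1 : Matrix n n ℂ) - M).det = 0 := by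
  have h := eval_det (Matrix.charmatrix M) z
  rw [show (Matrix.charmatrix M).det = M.charpoly from rfl, Matrix.matPolyEquiv_charmatrix] at h
  rw [Polynomial.IsRoot.def] at hz
  rw [hz] at h
  have h2 : Polynomial.eval (Matrix.scalar n z) (Polynomial.X - Polynomial.C M)
      = z • (1 : Matrix n n ℂ) - M := by
    rw [Polynomial.eval_sub, Polynomial.eval_X, Polynomial.eval_C, Matrix.scalar_apply,
      Matrix.smul_one_eq_diagonal]
  rw [h2] at h
  exact h.symm

lemma eig_abs_pow_le' {N : ℕ} (A : Matrix (Fin N) (Fin N) ℝ) (hA : ∀ i j, 0 ≤ A i j)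
    (M : ℕ) (c : ℝ) (hc : ∀ j, ∑ k, (A ^ M) j k ≤ c)
    {z : ℂ} {v : Fin N → ℂ} (hv : v ≠ 0) (heig : (A.map Complex.ofReal).mulVec v = z • v) :
    (‖z‖) ^ M ≤ c := by
  obtain ⟨k₀, hk₀⟩ : ∃ k, v k ≠ 0 := Function.ne_iff.mp hv
  have hne : Nonempty (Fin N) := ⟨k₀⟩
  have hpow : ∀ n : ℕ, ((A ^ n).map Complex.ofReal).mulVec v = z ^ n • v := by
    intro n
    induction n with
    | zero => simp [Matrix.map_one]
    | succ n ih =>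
      have hmap : (A ^ (n + 1)).map Complex.ofReal
          = ((A ^ n).map Complex.ofReal) * (A.map Complex.ofReal) := by
        ext i k
        simp only [pow_succ, Matrix.mul_apply, Matrix.map_apply]
        push_cast
        rfl
      rw [hmap, ← Matrix.mulVec_mulVec, heig, Matrix.mulVec_smul, ih, smul_smul, pow_succ,
        mul_comm]
  obtain ⟨j, -, hjmax⟩ := Finset.exists_max_image Finset.univ (fun k => ‖v k‖)
    Finset.univ_nonempty
  have hvj : 0 < ‖v j‖ :=
    lt_of_lt_of_le (norm_pos_iff.mpr hk₀) (hjmax k₀ (Finset.mem_univ _))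
  have hentry := congrFun (hpow M) j
  simp only [Matrix.mulVec, dotProduct, Matrix.map_apply, Pi.smul_apply,
    smul_eq_mul] at hentry
  have hchain : (‖z‖) ^ M * ‖v j‖ ≤ c * ‖v j‖ := by
    calc (‖z‖) ^ M * ‖v j‖
        = ‖z ^ M * v j‖ := by rw [norm_mul, norm_pow]
      _ = ‖∑ k, ((A ^ M) j k : ℂ) * v k‖ := by rw [← hentry]
      _ ≤ ∑ k, ‖((A ^ M) j k : ℂ) * v k‖ := norm_sum_le _ _
      _ = ∑ k, (A ^ M) j k * ‖v k‖ := by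
          refine Finset.sum_congr rfl fun k _ => ?_
          rw [norm_mul, Complex.norm_real, Real.norm_of_nonneg (pow_entry_nonneg' A hA M j k)]
      _ ≤ ∑ k, (A ^ M) j k * ‖v j‖ :=
          Finset.sum_le_sum fun k _ =>
            mul_le_mul_of_nonneg_left (hjmax k (Finset.mem_univ _))
              (pow_entry_nonneg' A hA M j k)
      _ = (∑ k, (A ^ M) j k) * ‖v j‖ := by rw [Finset.sum_mul]
      _ ≤ c * ‖v j‖ :=
          mul_le_mul_of_nonneg_right (hc j) (norm_nonneg _)
  exact le_of_mul_le_mul_right hchain hvj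

/-- if `N ≥ 2`, `A` is irreducible, and `λ_j > 0` for at least one
user `j`, then `ρ(A) < 1`. -/
theorem stmt4 (N : ℕ) (hN : 2 ≤ N) (L : Fin N → Finset (Fin N))
    (hL : ∀ j, (L j).Nonempty) (lam mu : Fin N → ℝ)
    (hlam : ∀ n, 0 ≤ lam n) (hmu : ∀ n, 0 ≤ mu n)
    (hpos : ∀ n, 0 < lam n + mu n)
    (hirr : ∀ j k, ∃ m : ℕ, 1 ≤ m ∧ 0 < (propA N L lam mu ^ m) j k)
    (hlamj : ∃ j, 0 < lam j) :
    specRad N (propA N L lam mu) < 1 := by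
  have hne : Nonempty (Fin N) := ⟨⟨0, by omega⟩⟩
  set A := propA N L lam mu with hAdef
  have hS : ∀ j, 0 < ∑ l ∈ L j, (lam l + mu l) :=
    fun j => Finset.sum_pos (fun l _ => hpos l) (hL j)
  have hAnn : ∀ i j, 0 ≤ A i j := by
    intro i j
    rw [hAdef, propA]
    simp only [Matrix.of_apply]
    split
    · exact div_nonneg (hmu j) (hS i).le
    · exact le_refl 0
  -- row sums of A
  have hrowA : ∀ i, ∑ j, A i j = (∑ k ∈ L i, mu k) / (∑ l ∈ L i, (lam l + mu l)) := by
    intro i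
    rw [hAdef]
    simp only [propA, Matrix.of_apply]
    rw [Finset.sum_ite_mem, Finset.univ_inter, Finset.sum_div]
  have hrow1 : ∀ i, ∑ j, A i j ≤ 1 := by
    intro i
    rw [hrowA i, div_le_one (hS i)]
    exact Finset.sum_le_sum fun l _ => by nlinarith [hlam l]
  -- a row with sum < 1
  obtain ⟨j₀, hj₀⟩ := hlamj
  obtain ⟨m₀, hm₀1, hm₀pos⟩ := hirr j₀ j₀
  obtain ⟨p, hp⟩ := exists_col_pos' A hAnn m₀ hm₀1 j₀ j₀ hm₀pos
  have hj₀L : j₀ ∈ L p := by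
    by_contra hcon
    rw [hAdef] at hp
    simp only [propA, Matrix.of_apply, if_neg hcon] at hp
    exact lt_irrefl 0 hp
  have hrp : ∑ j, A p j < 1 := by
    rw [hrowA p, div_lt_one (hS p)]
    have h1 : ∑ k ∈ L p, mu k < ∑ k ∈ L p, (lam k + mu k) := by
      have h2 : lam j₀ ≤ ∑ k ∈ L p, lam k :=
        Finset.single_le_sum (fun k _ => hlam k) hj₀L
      have h3 : ∑ k ∈ L p, (lam k + mu k) = (∑ k ∈ L p, lam k) + ∑ k ∈ L p, mu k :=
        Finset.sum_add_distrib
      linarith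
    exact h1
  -- rowsums of powers decrease
  have hmono : ∀ j m, ∑ k, (A ^ (m + 1)) j k ≤ ∑ k, (A ^ m) j k := by
    intro j m
    rw [pow_succ, rowsum_mul']
    calc ∑ q, (A ^ m) j q * ∑ k, A q k
        ≤ ∑ q, (A ^ m) j q * 1 :=
          Finset.sum_le_sum fun q _ =>
            mul_le_mul_of_nonneg_left (hrow1 q) (pow_entry_nonneg' A hAnn m j q)
      _ = ∑ q, (A ^ m) j q := by simp
  have hmono' : ∀ j m m', m ≤ m' → ∑ k, (A ^ m') j k ≤ ∑ k, (A ^ m) j k := by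
    intro j m m' hmm
    induction m' with
    | zero => simp_all
    | succ n ih =>
      rcases Nat.lt_or_ge m (n + 1) with h | h
      · exact le_trans (hmono j n) (ih (by omega))
      · have : m = n + 1 := by omega
        rw [this]
  -- each row eventually has sum < 1
  have hstrict : ∀ j, ∃ m, ∑ k, (A ^ m) j k < 1 := by
    intro j
    obtain ⟨m, _, hmp⟩ := hirr j p
    refine ⟨m + 1, ?_⟩
    rw [pow_succ, rowsum_mul']
    calc ∑ q, (A ^ m) j q * ∑ k, A q k
        < ∑ q, (A ^ m) j q :=  by
          refine Finset.sum_lt_sum (fun q _ => ?_) ⟨p, Finset.mem_univ p, ?_⟩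
          · calc (A ^ m) j q * ∑ k, A q k ≤ (A ^ m) j q * 1 :=
                mul_le_mul_of_nonneg_left (hrow1 q) (pow_entry_nonneg' A hAnn m j q)
              _ = (A ^ m) j q := mul_one _
          · calc (A ^ m) j p * ∑ k, A p k < (A ^ m) j p * 1 :=
                mul_lt_mul_of_pos_left hrp hmp
              _ = (A ^ m) j p := mul_one _
      _ ≤ 1 := rowsum_pow_le_one' A hAnn hrow1 m j
  -- uniform power M
  set f : Fin N → ℕ := fun j => Classical.choose (hstrict j) with hfdef
  have hfspec : ∀ j, ∑ k, (A ^ (f j)) j k < 1 := fun j => Classical.choose_spec (hstrict j)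
  set M : ℕ := 1 + ∑ j, f j with hMdef
  have hMf : ∀ j, f j ≤ M := by
    intro j
    have := Finset.single_le_sum (f := f) (fun k _ => Nat.zero_le (f k)) (Finset.mem_univ j)
    omega
  have hMrow : ∀ j, ∑ k, (A ^ M) j k < 1 :=
    fun j => lt_of_le_of_lt (hmono' j (f j) M (hMf j)) (hfspec j)
  -- the uniform constant c
  set c : ℝ := Finset.univ.sup' Finset.univ_nonempty (fun j => ∑ k, (A ^ M) j k) with hcdef
  have hc1 : c < 1 := (Finset.sup'_lt_iff _).mpr fun j _ => hMrow j
  have hcrow : ∀ j, ∑ k, (A ^ M) j k ≤ c := fun j => Finset.le_sup' (fun j => ∑ k, (A ^ M) j k) (Finset.mem_univ j)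
  have hc0 : 0 ≤ c := by
    obtain ⟨j⟩ := hne
    exact le_trans (Finset.sum_nonneg fun k _ => pow_entry_nonneg' A hAnn M j k)
      (hcrow j)
  have hM0 : (M : ℝ) ≠ 0 := by
    have : 1 ≤ M := by omega
    positivity
  -- eigenvalue bound
  have hzbound : ∀ z : ℂ, ((A.map Complex.ofReal).charpoly).IsRoot z →
      ‖z‖ ≤ c ^ ((M : ℝ)⁻¹) := by
    intro z hz
    have hdet := det_smul_one_sub_eq_zero' (A.map Complex.ofReal) hz
    obtain ⟨v, hv, hmv⟩ := Matrix.exists_mulVec_eq_zero_iff.mpr hdet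
    have heig : (A.map Complex.ofReal).mulVec v = z • v := by
      rw [Matrix.sub_mulVec, Matrix.smul_mulVec, Matrix.one_mulVec] at hmv
      exact (sub_eq_zero.mp hmv).symm
    have hzM : (‖z‖) ^ M ≤ c := eig_abs_pow_le' A hAnn M c hcrow hv heig
    have habs : (0 : ℝ) ≤ ‖z‖ := norm_nonneg _
    calc ‖z‖
        = ((‖z‖) ^ M) ^ ((M : ℝ)⁻¹) := by
          rw [← Real.rpow_natCast (‖z‖) M, ← Real.rpow_mul habs,
            mul_inv_cancel₀ hM0, Real.rpow_one]
      _ ≤ c ^ ((M : ℝ)⁻¹) :=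
          Real.rpow_le_rpow (pow_nonneg habs M) hzM (by positivity)
  have ht1 : c ^ ((M : ℝ)⁻¹) < 1 := by
    refine Real.rpow_lt_one hc0 hc1 ?_
    have : 1 ≤ M := by omega
    positivity
  refine lt_of_le_of_lt ?_ ht1
  refine Real.sSup_le ?_ (Real.rpow_nonneg hc0 _)
  rintro r ⟨z, hz, rfl⟩
  exact hzbound z hz
end

section
/- Suppose ρ(A) < 1, and for each user i let p_i = (I_N − A)^{-1} b_i. Then for every user n, Σ_{i=1}^N (p_i)_n = 1; that is, the Newsfeed steady-state probabilities over all post origins i sum to one on every Newsfeed n. -/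
open Matrix Finset Filter

/-- Charpoly evaluated at `t` is `det (t • 1 - M)`. -/
lemma charpoly_eval {n : Type*} [DecidableEq n] [Fintype n] {R : Type*} [CommRing R]
    (M : Matrix n n R) (t : R) :
    M.charpoly.eval t = (Matrix.scalar n t - M).det := by
  rw [Matrix.charpoly, eval_det, Matrix.matPolyEquiv_charmatrix]
  simp

lemma det_one_sub_ne_zero (N : ℕ) (T : Matrix (Fin N) (Fin N) ℝ)
    (hrho : specRad N T < 1) : (1 - T).det ≠ 0 := by
  intro h
  have hroot : ((T.map Complex.ofReal).charpoly).IsRoot 1 := by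
    have : ((T.map Complex.ofReal).charpoly).eval 1 = (1 - T.map Complex.ofReal).det := by
      rw [charpoly_eval]; simp
    rw [Polynomial.IsRoot, this]
    have : (1 - T.map Complex.ofReal) = (1 - T).map Complex.ofReal := by
      ext i j
      simp [Matrix.map_apply, Matrix.one_apply, apply_ite]
    rw [this, show (1 - T).map Complex.ofReal
        = (Complex.ofRealHom : ℝ →+* ℂ).mapMatrix (1 - T) from rfl,
      ← RingHom.map_det, h, map_zero]
  have hmem : (1 : ℝ) ∈ {r : ℝ | ∃ z : ℂ, ((T.map Complex.ofReal).charpoly).IsRoot z ∧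
      r = ‖z‖} := ⟨1, hroot, by simp⟩
  have hbdd : BddAbove {r : ℝ | ∃ z : ℂ, ((T.map Complex.ofReal).charpoly).IsRoot z ∧
      r = ‖z‖} := by
    have hp0 : (T.map Complex.ofReal).charpoly ≠ 0 :=
      (T.map Complex.ofReal).charpoly_monic.ne_zero
    have hfin : ({r : ℝ | ∃ z : ℂ, ((T.map Complex.ofReal).charpoly).IsRoot z ∧
        r = ‖z‖}).Finite := by
      have := (Polynomial.finite_setOf_isRoot hp0).image (fun z : ℂ => ‖z‖)
      apply this.subset
      rintro r ⟨z, hz, rfl⟩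
      exact ⟨z, hz, rfl⟩
    exact hfin.bddAbove
  have : (1 : ℝ) ≤ specRad N T := le_csSup hbdd hmem
  linarith

/-- if `ρ(A) < 1` and `p_i = (I - A)⁻¹ b_i`, then for every user
`n` the Newsfeed probabilities sum to one: `Σ_i (p_i)_n = 1`. -/
theorem stmt10 (N : ℕ) (hN : 1 ≤ N) (L : Fin N → Finset (Fin N))
    (hL : ∀ j, (L j).Nonempty) (lam mu : Fin N → ℝ)
    (hlam : ∀ n, 0 ≤ lam n) (hmu : ∀ n, 0 ≤ mu n)
    (hpos : ∀ n, 0 < lam n + mu n)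
    (hrho : specRad N (propA N L lam mu) < 1) :
    ∀ n : Fin N,
      ∑ i, (1 - propA N L lam mu)⁻¹.mulVec (bvec N L lam mu i) n = 1 := by
  intro n
  set A := propA N L lam mu with hA
  have hdet : (1 - A).det ≠ 0 := det_one_sub_ne_zero N A hrho
  -- key: ∑ i, bvec i = (1 - A).mulVec 1
  have hkey : (∑ i, bvec N L lam mu i) = (1 - A).mulVec (fun _ => 1) := by
    funext j
    have hS : (0:ℝ) < ∑ l ∈ L j, (lam l + mu l) :=
      Finset.sum_pos (fun l _ => hpos l) (hL j)
    have h1 : (∑ i, bvec N L lam mu i) j = (∑ l ∈ L j, lam l) / (∑ l ∈ L j, (lam l + mu l)) := by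
      simp only [Finset.sum_apply, bvec]
      rw [Finset.sum_ite_mem, Finset.univ_inter, Finset.sum_div]
    have h2 : (1 - A).mulVec (fun _ => 1) j
        = 1 - (∑ l ∈ L j, mu l) / (∑ l ∈ L j, (lam l + mu l)) := by
      simp only [Matrix.mulVec, dotProduct, Matrix.sub_apply, sub_mul, Finset.sum_sub_distrib,
        mul_one, hA, propA, Matrix.of_apply]
      rw [Finset.sum_ite_mem, Finset.univ_inter, Finset.sum_div]
      congr 1
      simp [Matrix.one_apply]
    rw [h1, h2, eq_sub_iff_add_eq, ← add_div, ← Finset.sum_add_distrib,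
      div_self hS.ne']
  calc ∑ i, (1 - A)⁻¹.mulVec (bvec N L lam mu i) n
      = (1 - A)⁻¹.mulVec (∑ i, bvec N L lam mu i) n := by
        simp only [Matrix.mulVec, dotProduct, Finset.sum_apply, Finset.mul_sum]
        exact Finset.sum_comm
    _ = ((1 - A)⁻¹ * (1 - A)).mulVec (fun _ => 1) n := by
        rw [hkey, Matrix.mulVec_mulVec]
    _ = 1 := by rw [Matrix.nonsing_inv_mul _ (isUnit_iff_ne_zero.mpr hdet)]; simp
end

section
/- Suppose ρ(A) < 1, and for each user i let q_i = C (I_N − A)^{-1} b_i + d_i. Then for every user n, Σ_{i=1}^N (q_i)_n = 1; that is, the Wall steady-state probabilities over all post origins i sum to one on every Wall n. -/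
open Matrix Finset Filter

lemma eval_one_charpoly {N : ℕ} (M : Matrix (Fin N) (Fin N) ℂ) :
    (M.charpoly).eval 1 = (1 - M).det := by
  rw [Matrix.charpoly, ← Polynomial.coe_evalRingHom, RingHom.map_det]
  congr 1
  ext i j
  rcases eq_or_ne i j with h | h
  · subst h
    simp [charmatrix_apply_eq]
  · simp [charmatrix_apply_ne _ _ _ h, Matrix.one_apply_ne h]

set_option maxHeartbeats 800000 in
/-- if `ρ(A) < 1` and `q_i = C (I - A)⁻¹ b_i + d_i`, then for
every user `n` the Wall probabilities sum to one: `Σ_i (q_i)_n = 1`. -/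
theorem stmt11 (N : ℕ) (hN : 1 ≤ N) (L : Fin N → Finset (Fin N))
    (hL : ∀ j, (L j).Nonempty) (lam mu : Fin N → ℝ)
    (hlam : ∀ n, 0 ≤ lam n) (hmu : ∀ n, 0 ≤ mu n)
    (hpos : ∀ n, 0 < lam n + mu n)
    (hrho : specRad N (propA N L lam mu) < 1) :
    ∀ n : Fin N,
      ∑ i, ((Cmat N lam mu).mulVec
              ((1 - propA N L lam mu)⁻¹.mulVec (bvec N L lam mu i)) +
            dvec N lam mu i) n = 1 := by
  set A := propA N L lam mu with hA
  have hS : ∀ j, 0 < ∑ l ∈ L j, (lam l + mu l) := fun j =>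
    Finset.sum_pos (fun l _ => hpos l) (hL j)
  -- invertibility of 1 - A
  have hdet : IsUnit (1 - A).det := by
    rw [isUnit_iff_ne_zero]
    intro h0
    have hCdet : (1 - A.map (Complex.ofReal : ℝ → ℂ)).det = 0 := by
      have : ((1 - A).map (Complex.ofReal)).det = 0 := by
        rw [show ((1 - A).map Complex.ofReal) = Complex.ofRealHom.mapMatrix (1 - A) from rfl,
          ← RingHom.map_det, h0, map_zero]
      rw [← this]
      congr 1
      ext i j
      simp [Matrix.map_apply, Matrix.one_apply]
      split_ifs <;> simp
    have hroot : ((A.map Complex.ofReal).charpoly).IsRoot 1 := by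
      rw [Polynomial.IsRoot, eval_one_charpoly, hCdet]
    have hmem : (1 : ℝ) ∈ {r : ℝ | ∃ z : ℂ, ((A.map Complex.ofReal).charpoly).IsRoot z ∧
        r = ‖z‖} := ⟨1, hroot, by simp⟩
    have hbdd : BddAbove {r : ℝ | ∃ z : ℂ, ((A.map Complex.ofReal).charpoly).IsRoot z ∧
        r = ‖z‖} := by
      have hne : (A.map Complex.ofReal).charpoly ≠ 0 :=
        (Matrix.charpoly_monic _).ne_zero
      have hfin : {z : ℂ | ((A.map Complex.ofReal).charpoly).IsRoot z}.Finite :=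
        Polynomial.finite_setOf_isRoot hne
      have : {r : ℝ | ∃ z : ℂ, ((A.map Complex.ofReal).charpoly).IsRoot z ∧
          r = ‖z‖} = (‖·‖) '' {z : ℂ | ((A.map Complex.ofReal).charpoly).IsRoot z} := by
        ext r; simp [eq_comm, Set.mem_image]
      rw [this]
      exact (hfin.image _).bddAbove
    have : (1 : ℝ) ≤ specRad N A := le_csSup hbdd hmem
    linarith
  intro n
  -- sum of b_i equals (1 - A) * 1
  have hb : ∑ i, bvec N L lam mu i = (1 - A).mulVec (fun _ => 1) := by
    funext j
    have hSne : (∑ l ∈ L j, (lam l + mu l)) ≠ 0 := (hS j).ne'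
    simp only [Finset.sum_apply, bvec, Matrix.mulVec, dotProduct, Matrix.sub_apply,
      Matrix.one_apply, hA, propA, Matrix.of_apply, mul_one, Finset.sum_sub_distrib,
      Finset.sum_ite_eq, Finset.mem_univ, if_true]
    rw [Finset.sum_ite_mem, Finset.univ_inter, Finset.sum_ite_mem, Finset.univ_inter,
      ← Finset.sum_div, ← Finset.sum_div]
    rw [eq_sub_iff_add_eq, ← add_div, ← Finset.sum_add_distrib, div_self hSne]
  have hinv : (1 - A)⁻¹.mulVec (∑ i, bvec N L lam mu i) = (fun _ => 1) := by
    rw [hb, Matrix.mulVec_mulVec, Matrix.nonsing_inv_mul _ hdet, Matrix.one_mulVec]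
  -- main computation
  have hsum1 : ∑ i, ((Cmat N lam mu).mulVec
      ((1 - A)⁻¹.mulVec (bvec N L lam mu i))) n
      = ((Cmat N lam mu).mulVec ((1 - A)⁻¹.mulVec (∑ i, bvec N L lam mu i))) n := by
    simp only [← Matrix.mulVecLin_apply, map_sum, Finset.sum_apply]
  simp only [Pi.add_apply, Finset.sum_add_distrib]
  rw [hsum1, hinv]
  have hC : ((Cmat N lam mu).mulVec (fun _ => 1)) n = mu n / (lam n + mu n) := by
    simp [Cmat, Matrix.mulVec_diagonal]
  have hd : ∑ i, dvec N lam mu i n = lam n / (lam n + mu n) := by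
    simp [dvec, Finset.sum_ite_eq]
  rw [hC, hd, ← add_div, add_comm, div_self (hpos n).ne']
end

section
/- Suppose ρ(A) < 1, and for each user i let p_i = (I_N − A)^{-1} b_i and q_i = C (I_N − A)^{-1} b_i + d_i. Then every entry of p_i and every entry of q_i lies in the interval [0, 1]; in particular, the solutions of the linear system are valid probabilities. -/
open Matrix Finset Filter
open scoped Topology

section AuxNorm

attribute [local instance] Matrix.linftyOpNormedAddCommGroup Matrix.linftyOpNormedRing
  Matrix.linftyOpNormedSpace

/-- For a matrix with nonnegative entries and strictly substochastic rows,
`1 - M` has a unit determinant and `(1 - M)⁻¹` has nonnegative entries. -/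
lemma aux_inv_nonneg {N : ℕ} (M : Matrix (Fin N) (Fin N) ℝ)
    (hM : ∀ i j, 0 ≤ M i j) (hs : ∀ i, ∑ k, M i k < 1) :
    IsUnit (1 - M).det ∧ ∀ i j, 0 ≤ (1 - M)⁻¹ i j := by
  haveI : CompleteSpace (Matrix (Fin N) (Fin N) ℝ) := FiniteDimensional.complete ℝ _
  have hnn : ‖M‖₊ < 1 := by
    rw [Matrix.linfty_opNNNorm_def]
    refine (Finset.sup_lt_iff (by norm_num)).mpr fun i _ => ?_
    have hcoe : ((∑ k, ‖M i k‖₊ : NNReal) : ℝ) = ∑ k, M i k := by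
      push_cast
      exact Finset.sum_congr rfl fun k _ => by
        rw [Real.norm_eq_abs, abs_of_nonneg (hM i k)]
    have : ((∑ k, ‖M i k‖₊ : NNReal) : ℝ) < 1 := hcoe ▸ hs i
    exact_mod_cast this
  have hnorm : ‖M‖ < 1 := by
    rw [← coe_nnnorm]
    exact_mod_cast hnn
  have hunit : IsUnit (1 - M) := isUnit_one_sub_of_norm_lt_one hnorm
  refine ⟨(Matrix.isUnit_iff_isUnit_det _).mp hunit, ?_⟩
  intro i j
  have hsum : Summable (fun n : ℕ => M ^ n) := summable_geometric_of_norm_lt_one hnorm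
  have hinv : (1 - M)⁻¹ = ∑' n : ℕ, M ^ n := by
    rw [Matrix.nonsing_inv_eq_ringInverse, ← geom_series_eq_inverse M hnorm]
    rfl
  have hpow : ∀ (n : ℕ) (a b : Fin N), 0 ≤ (M ^ n) a b := by
    intro n
    induction n with
    | zero =>
      intro a b
      by_cases hab : a = b <;> simp [pow_zero, Matrix.one_apply, hab]
    | succ n ih =>
      intro a b
      rw [pow_succ, Matrix.mul_apply]
      exact Finset.sum_nonneg fun k _ => mul_nonneg (ih a k) (hM k b)
  set g : Matrix (Fin N) (Fin N) ℝ →L[ℝ] ℝ :=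
    LinearMap.toContinuousLinearMap (Matrix.entryLinearMap ℝ ℝ i j) with hg
  have hmap : g (∑' n : ℕ, M ^ n) = ∑' n : ℕ, g (M ^ n) :=
    g.map_tsum hsum
  have : (1 - M)⁻¹ i j = ∑' n : ℕ, (M ^ n) i j := by
    rw [hinv]
    exact hmap
  rw [this]
  exact tsum_nonneg fun n => hpow n i j

end AuxNorm

/-- If `M` is entrywise nonnegative with strictly substochastic rows and
`0 ≤ b` with `rowsum + b ≤ 1`, then `(1 - M)⁻¹ b` has entries in `[0,1]`. -/
lemma aux_step {N : ℕ} (M : Matrix (Fin N) (Fin N) ℝ) (b : Fin N → ℝ)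
    (hM : ∀ i j, 0 ≤ M i j) (hb : ∀ j, 0 ≤ b j)
    (hrow : ∀ j, (∑ k, M j k) + b j ≤ 1) (hs : ∀ j, ∑ k, M j k < 1) :
    ∀ j, (1 - M)⁻¹.mulVec b j ∈ Set.Icc (0 : ℝ) 1 := by
  obtain ⟨hdet, hinv⟩ := aux_inv_nonneg M hM hs
  intro j
  have hentry : (1 - M)⁻¹.mulVec b j = ∑ k, (1 - M)⁻¹ j k * b k := by
    simp [Matrix.mulVec, dotProduct]
  constructor
  · rw [hentry]
    exact Finset.sum_nonneg fun k _ => mul_nonneg (hinv j k) (hb k)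
  · have hone : ∀ k, ((1 - M).mulVec (fun _ => (1 : ℝ))) k = 1 - ∑ l, M k l := by
      intro k
      simp [Matrix.mulVec, dotProduct, Matrix.sub_apply, Matrix.one_apply,
        Finset.sum_sub_distrib]
    have hvec : ∀ k, b k ≤ ((1 - M).mulVec (fun _ => (1 : ℝ))) k := by
      intro k
      rw [hone k]
      linarith [hrow k]
    have h1 : (1 - M)⁻¹.mulVec b j ≤ (1 - M)⁻¹.mulVec ((1 - M).mulVec fun _ => (1 : ℝ)) j := by
      rw [hentry]
      have : (1 - M)⁻¹.mulVec ((1 - M).mulVec fun _ => (1 : ℝ)) j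
          = ∑ k, (1 - M)⁻¹ j k * ((1 - M).mulVec fun _ => (1 : ℝ)) k := by
        simp [Matrix.mulVec, dotProduct]
      rw [this]
      exact Finset.sum_le_sum fun k _ => mul_le_mul_of_nonneg_left (hvec k) (hinv j k)
    have h2 : (1 - M)⁻¹.mulVec ((1 - M).mulVec fun _ => (1 : ℝ)) j = 1 := by
      rw [Matrix.mulVec_mulVec, Matrix.nonsing_inv_mul _ hdet, Matrix.one_mulVec]
    linarith

/-- Key lemma: drop strictness of substochasticity via a limit `t → 1⁻`. -/
lemma aux_key {N : ℕ} (M : Matrix (Fin N) (Fin N) ℝ) (b : Fin N → ℝ)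
    (hM : ∀ i j, 0 ≤ M i j) (hb : ∀ j, 0 ≤ b j)
    (hrow : ∀ j, (∑ k, M j k) + b j ≤ 1) (hdet : (1 - M).det ≠ 0) :
    ∀ j, (1 - M)⁻¹.mulVec b j ∈ Set.Icc (0 : ℝ) 1 := by
  intro j
  have hs0 : ∀ i, 0 ≤ ∑ k, M i k := fun i => Finset.sum_nonneg fun k _ => hM i k
  have hMle : ∀ i, ∑ k, M i k ≤ 1 := fun i => by linarith [hrow i, hb i]
  set F : ℝ → ℝ := fun t => ((1 - t • M)⁻¹.mulVec b) j with hFdef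
  have hcont : ContinuousAt F 1 := by
    have hg : Continuous fun t : ℝ => (1 : Matrix (Fin N) (Fin N) ℝ) - t • M :=
      continuous_const.sub (continuous_id.smul continuous_const)
    have h1' : ContinuousAt Inv.inv ((1 : Matrix (Fin N) (Fin N) ℝ) - M) := by
      refine continuousAt_matrix_inv _ ?_
      rw [Ring.inverse_eq_inv']
      exact continuousAt_inv₀ hdet
    have h1 : ContinuousAt Inv.inv ((1 : Matrix (Fin N) (Fin N) ℝ) - (1 : ℝ) • M) := by
      rwa [one_smul]
    have h2 : ContinuousAt (fun t : ℝ => ((1 : Matrix (Fin N) (Fin N) ℝ) - t • M)⁻¹) 1 :=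
      ContinuousAt.comp (f := fun t : ℝ => (1 : Matrix (Fin N) (Fin N) ℝ) - t • M)
        h1 hg.continuousAt
    have h3 : Continuous fun A : Matrix (Fin N) (Fin N) ℝ => A.mulVec b j := by
      show Continuous fun A : Matrix (Fin N) (Fin N) ℝ => ∑ k, A j k * b k
      exact continuous_finset_sum _ fun k _ => (continuous_id.matrix_elem j k).mul continuous_const
    exact h3.continuousAt.comp h2
  have hmem : ∀ᶠ t in 𝓝[<] (1 : ℝ), F t ∈ Set.Icc (0 : ℝ) 1 := by
    filter_upwards [Ioo_mem_nhdsLT_of_mem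
      (Set.mem_Ioc.mpr ⟨zero_lt_one, le_refl (1 : ℝ)⟩)] with t ht
    have h0t : (0 : ℝ) ≤ t := le_of_lt ht.1
    have ht1 : t < 1 := ht.2
    have hsum : ∀ a, ∑ k, (t • M) a k = t * ∑ k, M a k := by
      intro a
      simp [Matrix.smul_apply, smul_eq_mul, Finset.mul_sum]
    refine aux_step (t • M) b (fun a c => ?_) hb (fun a => ?_) (fun a => ?_) j
    · simpa [Matrix.smul_apply, smul_eq_mul] using mul_nonneg h0t (hM a c)
    · rw [hsum a]
      nlinarith [hrow a, hs0 a]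
    · rw [hsum a]
      nlinarith [hMle a, hs0 a]
  have htend : Tendsto F (𝓝[<] (1 : ℝ)) (𝓝 (F 1)) :=
    hcont.continuousWithinAt
  have hF1 : F 1 = (1 - M)⁻¹.mulVec b j := by simp [hFdef]
  rw [← hF1]
  exact ⟨ge_of_tendsto htend (hmem.mono fun t h => h.1),
    le_of_tendsto htend (hmem.mono fun t h => h.2)⟩

/-- Evaluation of the characteristic polynomial at a scalar. -/
lemma aux_eval_charpoly {n : ℕ} (A : Matrix (Fin n) (Fin n) ℂ) (z : ℂ) :
    A.charpoly.eval z = (z • (1 : Matrix (Fin n) (Fin n) ℂ) - A).det := by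
  rw [Matrix.charpoly, ← Polynomial.coe_evalRingHom, RingHom.map_det]
  congr 1
  ext i j
  by_cases h : i = j
  · subst h
    simp [Matrix.charmatrix_apply_eq, Matrix.one_apply, Matrix.smul_apply, Matrix.sub_apply]
  · simp [Matrix.charmatrix_apply_ne _ _ _ h, Matrix.one_apply_ne h, Matrix.sub_apply,
      Matrix.smul_apply, h]

/-- If the spectral radius is `< 1` then `det (1 - T) ≠ 0`. -/
lemma aux_det_ne {N : ℕ} (T : Matrix (Fin N) (Fin N) ℝ)
    (h : specRad N T < 1) : (1 - T).det ≠ 0 := by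
  intro h0
  set p := (T.map Complex.ofReal).charpoly with hp
  have hmap : ((1 : Matrix (Fin N) (Fin N) ℝ) - T).map Complex.ofReal
      = (1 : ℂ) • (1 : Matrix (Fin N) (Fin N) ℂ) - T.map Complex.ofReal := by
    ext i j
    by_cases hij : i = j <;>
      simp [Matrix.map_apply, Matrix.sub_apply, Matrix.one_apply, Matrix.smul_apply, hij]
  have hdet0 : (((1 : Matrix (Fin N) (Fin N) ℝ) - T).map Complex.ofReal).det = 0 := by
    rw [show ((1 - T).map Complex.ofReal : Matrix (Fin N) (Fin N) ℂ)
        = Complex.ofRealHom.mapMatrix (1 - T) from rfl, ← RingHom.map_det, h0]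
    simp
  have hroot : p.IsRoot 1 := by
    rw [Polynomial.IsRoot, hp, aux_eval_charpoly, ← hmap, hdet0]
  have hpne : p ≠ 0 := (Matrix.charpoly_monic _).ne_zero
  set S : Set ℝ := {r : ℝ | ∃ z : ℂ, p.IsRoot z ∧ r = ‖z‖} with hS
  have hmem : (1 : ℝ) ∈ S := ⟨1, hroot, by simp⟩
  have hfin : S.Finite := by
    have : S ⊆ (fun z : ℂ => ‖z‖) '' (p.roots.toFinset : Set ℂ) := by
      rintro r ⟨z, hz, rfl⟩
      exact ⟨z, by simpa [Multiset.mem_toFinset, Polynomial.mem_roots', hpne] using hz, rfl⟩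
    exact (((p.roots.toFinset : Finset ℂ)).finite_toSet.image _).subset this
  have : (1 : ℝ) ≤ specRad N T := le_csSup hfin.bddAbove hmem
  linarith

/-- if `ρ(A) < 1`, every entry of `p_i = (I - A)⁻¹ b_i` and of
`q_i = C (I - A)⁻¹ b_i + d_i` lies in `[0, 1]`. -/
theorem stmt12 (N : ℕ) (hN : 1 ≤ N) (L : Fin N → Finset (Fin N))
    (hL : ∀ j, (L j).Nonempty) (lam mu : Fin N → ℝ)
    (hlam : ∀ n, 0 ≤ lam n) (hmu : ∀ n, 0 ≤ mu n)
    (hpos : ∀ n, 0 < lam n + mu n)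
    (hrho : specRad N (propA N L lam mu) < 1) :
    ∀ i j : Fin N,
      (1 - propA N L lam mu)⁻¹.mulVec (bvec N L lam mu i) j ∈ Set.Icc (0 : ℝ) 1 ∧
      ((Cmat N lam mu).mulVec
          ((1 - propA N L lam mu)⁻¹.mulVec (bvec N L lam mu i)) +
        dvec N lam mu i) j ∈ Set.Icc (0 : ℝ) 1 := by
  intro i j
  set M := propA N L lam mu with hMdef
  set b := bvec N L lam mu i with hbdef
  have hS : ∀ j, 0 < ∑ l ∈ L j, (lam l + mu l) := fun j =>
    Finset.sum_pos (fun l _ => hpos l) (hL j)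
  have hM : ∀ a c, 0 ≤ M a c := by
    intro a c
    rw [hMdef]
    show (0:ℝ) ≤ if c ∈ L a then mu c / (∑ l ∈ L a, (lam l + mu l)) else 0
    split
    · exact div_nonneg (hmu c) (hS a).le
    · exact le_refl 0
  have hb : ∀ a, 0 ≤ b a := by
    intro a
    rw [hbdef]
    show (0:ℝ) ≤ if i ∈ L a then lam i / (∑ l ∈ L a, (lam l + mu l)) else 0
    split
    · exact div_nonneg (hlam i) (hS a).le
    · exact le_refl 0
  have hrowsum : ∀ a, ∑ k, M a k = (∑ k ∈ L a, mu k) / (∑ l ∈ L a, (lam l + mu l)) := by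
    intro a
    rw [hMdef]
    show (∑ k, if k ∈ L a then mu k / (∑ l ∈ L a, (lam l + mu l)) else 0) = _
    rw [Finset.sum_ite_mem, Finset.univ_inter, Finset.sum_div]
  have hrow : ∀ a, (∑ k, M a k) + b a ≤ 1 := by
    intro a
    rw [hrowsum a, hbdef]
    show (∑ k ∈ L a, mu k) / (∑ l ∈ L a, (lam l + mu l)) +
      (if i ∈ L a then lam i / (∑ l ∈ L a, (lam l + mu l)) else 0) ≤ 1
    have hsplit : ∑ l ∈ L a, (lam l + mu l) = (∑ l ∈ L a, lam l) + ∑ l ∈ L a, mu l :=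
      Finset.sum_add_distrib
    by_cases hi : i ∈ L a
    · rw [if_pos hi, ← add_div, div_le_one (hS a), hsplit]
      have : lam i ≤ ∑ l ∈ L a, lam l :=
        Finset.single_le_sum (fun l _ => hlam l) hi
      linarith
    · rw [if_neg hi, add_zero, div_le_one (hS a), hsplit]
      have : 0 ≤ ∑ l ∈ L a, lam l := Finset.sum_nonneg fun l _ => hlam l
      linarith
  have hdet : (1 - M).det ≠ 0 := aux_det_ne M hrho
  have hp := aux_key M b hM hb hrow hdet
  refine ⟨hp j, ?_⟩
  set p := (1 - M)⁻¹.mulVec b with hpdef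
  have hq : ((Cmat N lam mu).mulVec p + dvec N lam mu i) j
      = mu j / (lam j + mu j) * p j + (if j = i then lam i / (lam i + mu i) else 0) := by
    rw [Pi.add_apply, Cmat, Matrix.mulVec_diagonal]
    rfl
  have hp0 : 0 ≤ p j := (hp j).1
  have hp1 : p j ≤ 1 := (hp j).2
  have hc0 : 0 ≤ mu j / (lam j + mu j) := div_nonneg (hmu j) (hpos j).le
  have hc1 : mu j / (lam j + mu j) ≤ 1 := by
    rw [div_le_one (hpos j)]
    linarith [hlam j]
  rw [hq]
  constructor
  · have : (0:ℝ) ≤ if j = i then lam i / (lam i + mu i) else 0 := by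
      split
      · exact div_nonneg (hlam i) (hpos i).le
      · exact le_refl 0
    have := mul_nonneg hc0 hp0
    positivity
  · by_cases hji : j = i
    · subst hji
      rw [if_pos rfl]
      have h1 : mu j / (lam j + mu j) * p j ≤ mu j / (lam j + mu j) :=
        (mul_le_of_le_one_right hc0 hp1)
      have h2 : mu j / (lam j + mu j) + lam j / (lam j + mu j) = 1 := by
        rw [← add_div, add_comm]
        exact div_self (hpos j).ne'
      linarith
    · rw [if_neg hji, add_zero]
      calc mu j / (lam j + mu j) * p j ≤ mu j / (lam j + mu j) :=
            mul_le_of_le_one_right hc0 hp1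
        _ ≤ 1 := hc1
end
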